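/- arXiv:2511.16580 — 4 statements merged into one kernel-verified Lean document; each statement's English description precedes it below -/
import Mathlib

section
/- For every n ≥ 1 and every N ≥ n, the coefficient of X^n in the formal power series (1, 0) · (M_1 M_2 ⋯ M_N) · (1, 1)ᵀ equals b(n), the number of block-separated overpartitions of n. Moreover the coefficient of X^0 equals b(0) = 1. -/
open PowerSeries Matrix

/-- The separation condition: no two consecutive distinct part-sizes (i.e. two elements
of `S` with no part-size of `p` strictly between them) are both overlined. -/
def SepCond {n : ℕ} (p : Nat.Partition n) (S : Finset ℕ) : Prop :=
  ∀ d ∈ S, ∀ e ∈ S, d < e → ∃ c ∈ p.parts.toFinset, d < c ∧ c < e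

instance {n : ℕ} (p : Nat.Partition n) : DecidablePred (SepCond p) := fun _ =>
  Finset.decidableDforallFinset

/-- `b n` is the number of block-separated overpartitions of `n`: pairs `(λ, S)` of a
partition `λ` of `n` and a set `S` of overlined distinct part-sizes of `λ` such that no
two consecutive distinct part-sizes both lie in `S`. -/
def b (n : ℕ) : ℕ :=
  ∑ p : Nat.Partition n, (p.parts.toFinset.powerset.filter (fun S => SepCond p S)).card

/-- `Sgf j = ∑_{m ≥ 1} X^{j m}`, the generating function of a nonempty block of parts of
size `j`, as a formal power series over `ℤ`. -/
noncomputable def Sgf (j : ℕ) : PowerSeries ℤ :=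
  PowerSeries.mk fun k => if k ≠ 0 ∧ j ∣ k then 1 else 0

/-- The transfer matrix `M_j = [[1 + S_j, S_j], [S_j, 1]]`. -/
noncomputable def Mgf (j : ℕ) : Matrix (Fin 2) (Fin 2) (PowerSeries ℤ) :=
  Matrix.of ![![1 + Sgf j, Sgf j], ![Sgf j, 1]]

noncomputable def Amat : Matrix (Fin 2) (Fin 2) (PowerSeries ℤ) :=
  Matrix.of ![![1, 1], ![1, 0]]

lemma Mgf_eq (j : ℕ) : Mgf j = 1 + Sgf j • Amat := by
  ext i k
  fin_cases i <;> fin_cases k <;>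
    simp [Mgf, Amat, Matrix.one_apply]

lemma Amat_pow (k : ℕ) : (Amat ^ k) 0 0 = (Nat.fib (k + 1) : PowerSeries ℤ) ∧
    (Amat ^ k) 0 1 = (Nat.fib k : PowerSeries ℤ) := by
  induction k with
  | zero => simp [Matrix.one_apply]
  | succ k ih =>
    rw [pow_succ]
    constructor <;> rw [Matrix.mul_apply, Fin.sum_univ_two, ih.1, ih.2] <;>
      simp [Amat] <;> push_cast [Nat.fib_add_two] <;> ring

lemma prod_Mgf (N : ℕ) :
    ((List.range N).map (fun i => Mgf (i + 1))).prod
      = ∑ t ∈ (Finset.range N).powerset, (∏ i ∈ t, Sgf (i + 1)) • Amat ^ t.card := by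
  induction N with
  | zero => simp
  | succ N ih =>
    rw [List.range_succ, List.map_append, List.prod_append, List.map_singleton,
      List.prod_singleton, ih, Mgf_eq, Finset.range_add_one,
      Finset.sum_powerset_insert (by simp)]
    rw [mul_add, mul_one, Finset.sum_mul]
    congr 1
    refine Finset.sum_congr rfl fun t ht => ?_
    rw [Finset.mem_powerset] at ht
    have hN : N ∉ t := fun h => by simpa using ht h
    rw [Finset.prod_insert hN, Finset.card_insert_of_notMem hN,
      smul_mul_smul_comm, pow_succ, mul_comm (Sgf (N + 1))]

lemma coeff_phi (n N : ℕ) :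
    (PowerSeries.coeff n)
        (Matrix.vecMul ![1, 0] (((List.range N).map (fun i => Mgf (i + 1))).prod) ⬝ᵥ ![1, 1])
      = ∑ t ∈ (Finset.range N).powerset,
          (Nat.fib (t.card + 2) : ℤ) * (PowerSeries.coeff n) (∏ i ∈ t, Sgf (i + 1)) := by
  have hφ : ∀ M : Matrix (Fin 2) (Fin 2) (PowerSeries ℤ),
      Matrix.vecMul ![1, 0] M ⬝ᵥ ![1, 1] = M 0 0 + M 0 1 := by
    intro M
    simp [Matrix.vecMul, dotProduct, Fin.sum_univ_two]
  rw [hφ, prod_Mgf, Matrix.sum_apply, Matrix.sum_apply, ← Finset.sum_add_distrib, map_sum]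
  refine Finset.sum_congr rfl fun t ht => ?_
  rw [Matrix.smul_apply, Matrix.smul_apply, smul_eq_mul, smul_eq_mul, ← mul_add,
    (Amat_pow t.card).1, (Amat_pow t.card).2]
  have : ((Nat.fib (t.card + 1) : PowerSeries ℤ)) + (Nat.fib t.card : PowerSeries ℤ)
      = PowerSeries.C (Nat.fib (t.card + 2) : ℤ) := by
    rw [← Nat.cast_add, Nat.add_comm, ← Nat.fib_add_two]
    exact (map_natCast (PowerSeries.C) _).symm
  rw [this, PowerSeries.coeff_mul_C, mul_comm]

def Valid (D S : Finset ℕ) : Prop :=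
  ∀ d ∈ S, ∀ e ∈ S, d < e → ∃ c ∈ D, d < c ∧ c < e

instance (D : Finset ℕ) : DecidablePred (Valid D) := fun _ =>
  Finset.decidableDforallFinset

def tot (D : Finset ℕ) : ℕ := (D.powerset.filter (fun S => Valid D S)).card

def atot (D : Finset ℕ) : ℕ :=
  (D.powerset.filter (fun S => Valid D S ∧ ∀ s ∈ S, ∃ c ∈ D, s < c)).card

lemma lt_max' {D : Finset ℕ} (h : D.Nonempty) {e : ℕ} (he : e ∈ D.erase (D.max' h)) :
    e < D.max' h :=
  lt_of_le_of_ne (D.le_max' e (Finset.mem_of_mem_erase he)) (Finset.ne_of_mem_erase he)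

lemma valid_erase {D : Finset ℕ} (h : D.Nonempty) {S : Finset ℕ}
    (hS : S ⊆ D.erase (D.max' h)) : Valid D S ↔ Valid (D.erase (D.max' h)) S := by
  constructor
  · intro hv d hd e he hde
    obtain ⟨c, hc, h1, h2⟩ := hv d hd e he hde
    refine ⟨c, Finset.mem_erase.2 ⟨?_, hc⟩, h1, h2⟩
    exact ne_of_lt (lt_trans h2 (lt_max' h (hS he)))
  · intro hv d hd e he hde
    obtain ⟨c, hc, h1, h2⟩ := hv d hd e he hde
    exact ⟨c, Finset.mem_of_mem_erase hc, h1, h2⟩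

lemma valid_mono {D S S' : Finset ℕ} (h : S' ⊆ S) (hv : Valid D S) : Valid D S' :=
  fun d hd e he hde => hv d (h hd) e (h he) hde

lemma tot_atot_fib : ∀ (m : ℕ) (D : Finset ℕ), D.card = m →
    tot D = Nat.fib (m + 2) ∧ atot D = Nat.fib (m + 1) := by
  intro m
  induction m with
  | zero =>
    intro D hD
    rw [Finset.card_eq_zero] at hD
    subst hD
    constructor <;> rfl
  | succ m ih =>
    intro D hD
    have hne : D.Nonempty := Finset.card_pos.1 (by omega)
    set M := D.max' hne with hM
    set D' := D.erase M with hD'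
    have hMD : M ∈ D := D.max'_mem hne
    have hcard : D'.card = m := by
      rw [hD', Finset.card_erase_of_mem hMD, hD]
      omega
    obtain ⟨ihtot, ihatot⟩ := ih D' hcard
    -- atot D = tot D'
    have hatot : atot D = tot D' := by
      unfold atot tot
      congr 1
      ext S
      simp only [Finset.mem_filter, Finset.mem_powerset]
      constructor
      · rintro ⟨hSD, hv, hlt⟩
        have hSD' : S ⊆ D' := by
          intro s hs
          rw [hD', Finset.mem_erase]
          refine ⟨?_, hSD hs⟩
          intro hsM
          obtain ⟨c, hc, hlt2⟩ := hlt s hs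
          have hcM := D.le_max' c hc
          omega
        exact ⟨hSD', (valid_erase hne hSD').1 hv⟩
      · rintro ⟨hSD', hv⟩
        refine ⟨hSD'.trans (Finset.erase_subset _ _), (valid_erase hne hSD').2 hv, ?_⟩
        intro s hs
        exact ⟨M, hMD, lt_max' hne (hSD' hs)⟩
    -- tot D = atot D' + tot D'
    have htot : tot D = atot D' + tot D' := by
      unfold tot
      rw [← Finset.card_filter_add_card_filter_not
        (p := fun S => M ∈ S) (s := D.powerset.filter (fun S => Valid D S)),
        Finset.filter_filter, Finset.filter_filter]
      congr 1
      · -- M ∈ S part equals atot D'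
        unfold atot
        refine Finset.card_bij' (fun S _ => S.erase M) (fun S _ => insert M S) ?_ ?_ ?_ ?_
        · intro S hS
          simp only [Finset.mem_filter, Finset.mem_powerset] at hS ⊢
          obtain ⟨hSD, hv, hMS⟩ := hS
          have hsub : S.erase M ⊆ D' := Finset.erase_subset_erase _ hSD
          refine ⟨hsub, (valid_erase hne hsub).1 (valid_mono (Finset.erase_subset _ _) hv), ?_⟩
          intro s hs
          have hsS : s ∈ S := Finset.mem_of_mem_erase hs
          have hsM : s < M := lt_max' hne (hsub hs)
          obtain ⟨c, hc, h1, h2⟩ := hv s hsS M hMS hsM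
          exact ⟨c, Finset.mem_erase.2 ⟨by omega, hc⟩, h1⟩
        · intro S hS
          simp only [Finset.mem_filter, Finset.mem_powerset] at hS ⊢
          obtain ⟨hSD', hv, hlt⟩ := hS
          have hSD : S ⊆ D := hSD'.trans (Finset.erase_subset _ _)
          refine ⟨Finset.insert_subset hMD hSD, ?_, Finset.mem_insert_self _ _⟩
          intro d hd e he hde
          rcases Finset.mem_insert.1 hd with rfl | hdS
          · rcases Finset.mem_insert.1 he with rfl | heS
            · omega
            · have := lt_max' hne (hSD' heS)
              omega
          · rcases Finset.mem_insert.1 he with rfl | heS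
            · obtain ⟨c, hc, h1⟩ := hlt d hdS
              exact ⟨c, Finset.mem_of_mem_erase hc, h1, lt_max' hne hc⟩
            · obtain ⟨c, hc, h1, h2⟩ := hv d hdS e heS hde
              exact ⟨c, Finset.mem_of_mem_erase hc, h1, h2⟩
        · intro S hS
          simp only [Finset.mem_filter] at hS
          exact Finset.insert_erase hS.2.2
        · intro S hS
          simp only [Finset.mem_filter, Finset.mem_powerset] at hS
          exact Finset.erase_insert (fun h => Finset.notMem_erase M D (hS.1 h))
      · -- M ∉ S part equals tot D'
        congr 1
        ext S
        simp only [Finset.mem_filter, Finset.mem_powerset]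
        constructor
        · rintro ⟨hSD, hv, hMS⟩
          have hsub : S ⊆ D' := fun s hs =>
            Finset.mem_erase.2 ⟨fun h => hMS (h ▸ hs), hSD hs⟩
          exact ⟨hsub, (valid_erase hne hsub).1 hv⟩
        · rintro ⟨hsub, hv⟩
          exact ⟨hsub.trans (Finset.erase_subset _ _), (valid_erase hne hsub).2 hv,
            fun h => Finset.notMem_erase M D (hsub h)⟩
    refine ⟨?_, ?_⟩
    · rw [htot, ihtot, ihatot]
      have : m + 1 + 2 = (m + 1) + 2 := rfl
      rw [show m + 1 + 2 = m + 3 from rfl, Nat.fib_add_two (n := m + 1)]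
    · rw [hatot, ihtot]

lemma coeff_Sprod (n : ℕ) (t : Finset ℕ) :
    (PowerSeries.coeff n) (∏ i ∈ t, Sgf (i + 1))
      = (((t.finsuppAntidiag n).filter
          (fun l => ∀ i ∈ t, l i ≠ 0 ∧ (i + 1) ∣ l i)).card : ℤ) := by
  rw [PowerSeries.coeff_prod]
  have h : ∀ l : ℕ →₀ ℕ,
      (∏ i ∈ t, (PowerSeries.coeff (l i)) (Sgf (i + 1)))
        = if (∀ i ∈ t, l i ≠ 0 ∧ (i + 1) ∣ l i) then (1 : ℤ) else 0 := by
    intro l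
    rw [← Finset.prod_boole]
    exact Finset.prod_congr rfl fun i _ => by simp [Sgf, PowerSeries.coeff_mk]
  simp_rw [h]
  rw [Finset.sum_boole]

def mkParts (t : Finset ℕ) (l : ℕ →₀ ℕ) : Multiset ℕ :=
  t.val.bind (fun i => Multiset.replicate (l i / (i + 1)) (i + 1))

lemma count_mkParts (t : Finset ℕ) (l : ℕ →₀ ℕ) (j : ℕ) :
    Multiset.count j (mkParts t l) = ∑ i ∈ t, if i + 1 = j then l i / (i + 1) else 0 := by
  rw [mkParts, Multiset.count_bind, Finset.sum_eq_multiset_sum]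
  congr 1
  exact Multiset.map_congr rfl fun i _ => Multiset.count_replicate _ _ _

lemma count_mkParts_mem {t : Finset ℕ} {l : ℕ →₀ ℕ} {i : ℕ} (hi : i ∈ t) :
    Multiset.count (i + 1) (mkParts t l) = l i / (i + 1) := by
  rw [count_mkParts, Finset.sum_eq_single_of_mem i hi (fun b _ hb => if_neg (by omega)),
    if_pos rfl]

lemma count_mkParts_notmem {t : Finset ℕ} {l : ℕ →₀ ℕ} {j : ℕ}
    (hj : ∀ i ∈ t, i + 1 ≠ j) : Multiset.count j (mkParts t l) = 0 := by
  rw [count_mkParts]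
  exact Finset.sum_eq_zero fun i hi => if_neg (hj i hi)

lemma sum_mkParts (t : Finset ℕ) (l : ℕ →₀ ℕ) (hdvd : ∀ i ∈ t, (i + 1) ∣ l i) :
    (mkParts t l).sum = ∑ i ∈ t, l i := by
  rw [mkParts, Multiset.sum_bind]
  have : ∀ i ∈ t, (Multiset.replicate (l i / (i + 1)) (i + 1)).sum = l i := by
    intro i hi
    rw [Multiset.sum_replicate, smul_eq_mul, Nat.div_mul_cancel (hdvd i hi)]
  rw [Finset.sum_eq_multiset_sum] at *
  exact (Multiset.map_congr rfl this) ▸ rfl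

lemma toFinset_mkParts (t : Finset ℕ) (l : ℕ →₀ ℕ)
    (hP : ∀ i ∈ t, l i ≠ 0 ∧ (i + 1) ∣ l i) :
    (mkParts t l).toFinset = t.image (· + 1) := by
  ext j
  simp only [Multiset.mem_toFinset, mkParts, Multiset.mem_bind, Multiset.mem_replicate,
    Finset.mem_image, Finset.mem_val]
  constructor
  · rintro ⟨i, hi, -, rfl⟩
    exact ⟨i, hi, rfl⟩
  · rintro ⟨i, hi, rfl⟩
    refine ⟨i, hi, ?_, rfl⟩
    obtain ⟨hne, hdvd⟩ := hP i hi
    have := Nat.le_of_dvd (Nat.pos_of_ne_zero hne) hdvd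
    exact Nat.div_pos this (by omega) |>.ne'

def mkPartition (n : ℕ) (t : Finset ℕ) (l : ℕ →₀ ℕ) (hsum : ∑ i ∈ t, l i = n)
    (hP : ∀ i ∈ t, l i ≠ 0 ∧ (i + 1) ∣ l i) : Nat.Partition n where
  parts := mkParts t l
  parts_pos := by
    intro d hd
    rw [mkParts, Multiset.mem_bind] at hd
    obtain ⟨i, _, hi⟩ := hd
    rw [(Multiset.eq_of_mem_replicate hi)]
    omega
  parts_sum := by rw [sum_mkParts t l (fun i hi => (hP i hi).2), hsum]

def backT {n : ℕ} (p : Nat.Partition n) : Finset ℕ := p.parts.toFinset.image (· - 1)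

lemma mem_backT {n : ℕ} {p : Nat.Partition n} {i : ℕ} :
    i ∈ backT p ↔ (i + 1) ∈ p.parts := by
  simp only [backT, Finset.mem_image, Multiset.mem_toFinset]
  constructor
  · rintro ⟨d, hd, rfl⟩
    have : 0 < d := p.parts_pos hd
    rwa [Nat.sub_add_cancel this]
  · intro h
    exact ⟨i + 1, h, rfl⟩

noncomputable def backL {n : ℕ} (p : Nat.Partition n) : ℕ →₀ ℕ :=
  Finsupp.onFinset (backT p) (fun i => (i + 1) * p.parts.count (i + 1))
    (fun i h => mem_backT.2 (Multiset.count_pos.1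
      (Nat.pos_of_ne_zero (fun hc => h (by rw [hc, mul_zero])))))

lemma backL_apply {n : ℕ} (p : Nat.Partition n) (i : ℕ) :
    backL p i = (i + 1) * p.parts.count (i + 1) := rfl

lemma unpack {n N : ℕ} {a : Σ _ : Finset ℕ, ℕ →₀ ℕ}
    (ha : a ∈ (Finset.range N).powerset.sigma
      (fun t => (t.finsuppAntidiag n).filter (fun l => ∀ i ∈ t, l i ≠ 0 ∧ (i + 1) ∣ l i))) :
    (∑ i ∈ a.1, a.2 i = n) ∧ (∀ i ∈ a.1, a.2 i ≠ 0 ∧ (i + 1) ∣ a.2 i) ∧ a.2.support ⊆ a.1 := by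
  obtain ⟨h1, h2⟩ := Finset.mem_sigma.1 ha
  rw [Finset.mem_filter, Finset.mem_finsuppAntidiag] at h2
  exact ⟨h2.1.1, h2.2, h2.1.2⟩

lemma comb (n N : ℕ) (h : n ≤ N) :
    ∑ t ∈ (Finset.range N).powerset,
        Nat.fib (t.card + 2) *
          ((t.finsuppAntidiag n).filter (fun l => ∀ i ∈ t, l i ≠ 0 ∧ (i + 1) ∣ l i)).card
      = ∑ p : Nat.Partition n, Nat.fib (p.parts.toFinset.card + 2) := by
  have step : ∀ t ∈ (Finset.range N).powerset,
      Nat.fib (t.card + 2) * ((t.finsuppAntidiag n).filter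
        (fun l => ∀ i ∈ t, l i ≠ 0 ∧ (i + 1) ∣ l i)).card
      = ∑ l ∈ (t.finsuppAntidiag n).filter (fun l => ∀ i ∈ t, l i ≠ 0 ∧ (i + 1) ∣ l i),
          Nat.fib (t.card + 2) := fun t _ => by rw [Finset.sum_const, smul_eq_mul, mul_comm]
  rw [Finset.sum_congr rfl step, Finset.sum_sigma']
  refine Finset.sum_bij'
    (fun a ha => mkPartition n a.1 a.2 (unpack ha).1 (unpack ha).2.1)
    (fun p _ => ⟨backT p, backL p⟩) (fun _ _ => Finset.mem_univ _) ?_ ?_ ?_ ?_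
  · -- backward maps into the sigma set
    intro p _
    have hle : ∀ d ∈ p.parts, d ≤ n := fun d hd =>
      p.parts_sum ▸ Multiset.le_sum_of_mem hd
    refine Finset.mem_sigma.2 ⟨Finset.mem_powerset.2 ?_, Finset.mem_filter.2
      ⟨Finset.mem_finsuppAntidiag.2 ⟨?_, Finsupp.support_onFinset_subset (hf := fun i h => mem_backT.2 (Multiset.count_pos.1 (Nat.pos_of_ne_zero (fun hc => h (by rw [hc, mul_zero])))))⟩, ?_⟩⟩
    · intro i hi
      have := hle _ (mem_backT.1 hi)
      exact Finset.mem_range.2 (by omega)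
    · -- sum condition
      rw [show backT p = p.parts.toFinset.image (· - 1) from rfl,
        Finset.sum_image (fun d hd d' hd' hdd' => by
        have h1 : 0 < d := p.parts_pos (Multiset.mem_toFinset.1 hd)
        have h2 : 0 < d' := p.parts_pos (Multiset.mem_toFinset.1 hd')
        omega)]
      have : ∀ d ∈ p.parts.toFinset, backL p (d - 1) = p.parts.count d • d := by
        intro d hd
        have h1 : 0 < d := p.parts_pos (Multiset.mem_toFinset.1 hd)
        rw [backL_apply, Nat.sub_add_cancel h1, smul_eq_mul, mul_comm]
      rw [Finset.sum_congr rfl this, ← Finset.sum_multiset_count, p.parts_sum]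
    · -- divisibility/nonzero condition
      intro i hi
      have hmem : (i + 1) ∈ p.parts := mem_backT.1 hi
      have hcount : 0 < p.parts.count (i + 1) := Multiset.count_pos.2 hmem
      rw [backL_apply]
      exact ⟨by positivity, dvd_mul_right _ _⟩
  · -- left inverse
    intro a ha
    obtain ⟨hsum, hP, hsupp⟩ := unpack ha
    obtain ⟨t, l⟩ := a
    dsimp only at hsum hP hsupp ⊢
    have hparts : (mkPartition n t l hsum hP).parts = mkParts t l := rfl
    have ht : backT (mkPartition n t l hsum hP) = t := by
      rw [backT, hparts, toFinset_mkParts t l hP, Finset.image_image]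
      have : ∀ x ∈ t, ((fun x => x - 1) ∘ fun x => x + 1) x = id x := fun x _ => by
        simp
      rw [Finset.image_congr fun x hx => this x hx, Finset.image_id]
    have hl : backL (mkPartition n t l hsum hP) = l := by
      ext i
      rw [backL_apply, hparts]
      by_cases hi : i ∈ t
      · rw [count_mkParts_mem hi, Nat.mul_div_cancel' (hP i hi).2]
      · rw [count_mkParts_notmem (fun i' hi' h => hi (by
            obtain rfl : i' = i := by omega
            exact hi')), mul_zero]
        exact (Finsupp.notMem_support_iff.1 (fun hs => hi (hsupp hs))).symm
    exact Sigma.ext ht (heq_of_eq hl)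
  · -- right inverse
    intro p hp
    dsimp only
    ext1
    refine Multiset.ext.2 fun j => ?_
    show Multiset.count j (mkParts (backT p) (backL p)) = _
    by_cases hj : j ∈ p.parts
    · obtain ⟨i, rfl⟩ : ∃ i, j = i + 1 := ⟨j - 1, by have := p.parts_pos hj; omega⟩
      rw [count_mkParts_mem (mem_backT.2 hj), backL_apply,
        Nat.mul_div_cancel_left _ (Nat.succ_pos i)]
    · rw [Multiset.count_eq_zero.2 hj]
      exact count_mkParts_notmem fun i hi hij => hj (hij ▸ mem_backT.1 hi)
  · -- weights agree
    intro a ha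
    have : (mkPartition n a.1 a.2 (unpack ha).1 (unpack ha).2.1).parts.toFinset
        = a.1.image (· + 1) := toFinset_mkParts a.1 a.2 (unpack ha).2.1
    rw [this, Finset.card_image_of_injective _ (add_left_injective 1)]


lemma b_eq (n : ℕ) : b n = ∑ p : Nat.Partition n, Nat.fib (p.parts.toFinset.card + 2) := by
  unfold b
  refine Finset.sum_congr rfl fun p _ => ?_
  have h : (p.parts.toFinset.powerset.filter (fun S => SepCond p S))
      = (p.parts.toFinset.powerset.filter (fun S => Valid p.parts.toFinset S)) :=
    Finset.filter_congr (fun S _ => Iff.rfl)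
  rw [h]
  exact (tot_atot_fib p.parts.toFinset.card _ rfl).1

lemma grand (n N : ℕ) (h : n ≤ N) :
    (PowerSeries.coeff n)
        (Matrix.vecMul ![1, 0] (((List.range N).map (fun i => Mgf (i + 1))).prod) ⬝ᵥ ![1, 1])
      = (b n : ℤ) := by
  rw [coeff_phi]
  have hstep : ∀ t ∈ (Finset.range N).powerset,
      (Nat.fib (t.card + 2) : ℤ) * (PowerSeries.coeff n) (∏ i ∈ t, Sgf (i + 1))
      = ((Nat.fib (t.card + 2) * ((t.finsuppAntidiag n).filter
          (fun l => ∀ i ∈ t, l i ≠ 0 ∧ (i + 1) ∣ l i)).card : ℕ) : ℤ) := fun t _ => by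
    rw [coeff_Sprod]
    push_cast
    ring
  rw [Finset.sum_congr rfl hstep, ← Nat.cast_sum, comb n N h, b_eq]

/-- For `1 ≤ n ≤ N`, the coefficient of `X^n` in `(1,0) ⬝ (M_1 M_2 ⋯ M_N) ⬝ (1,1)ᵀ`
equals `b n`, the number of block-separated overpartitions of `n`; moreover the
coefficient of `X^0` equals `b 0 = 1`. -/
theorem coeff_transfer_matrix_product_eq_b (n N : ℕ) (hn : 1 ≤ n) (hN : n ≤ N) :
    (PowerSeries.coeff n)
        (Matrix.vecMul ![1, 0] (((List.range N).map (fun i => Mgf (i + 1))).prod) ⬝ᵥ ![1, 1])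
      = (b n : ℤ) ∧
    (PowerSeries.coeff 0)
        (Matrix.vecMul ![1, 0] (((List.range N).map (fun i => Mgf (i + 1))).prod) ⬝ᵥ ![1, 1])
      = (b 0 : ℤ) ∧
    b 0 = 1 := by
  refine ⟨grand n N hN, grand 0 N (Nat.zero_le N), ?_⟩
  have h0 := grand 0 0 (le_refl 0)
  simp [Matrix.vecMul_one, dotProduct, Fin.sum_univ_two] at h0
  exact_mod_cast h0.symm
end

section
/- For every natural number n, b(n) = ∑_{r=0}^{n} F_{r+2} · d_r(n), where d_r(n) is the number of partitions of n having exactly r distinct part-sizes. -/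
/-- `d r n` is the number of partitions of `n` with exactly `r` distinct part-sizes. -/
def d (r n : ℕ) : ℕ :=
  ((Finset.univ : Finset (Nat.Partition n)).filter
    (fun p => p.parts.toFinset.card = r)).card

def SepT (T S : Finset ℕ) : Prop :=
  ∀ d ∈ S, ∀ e ∈ S, d < e → ∃ c ∈ T, d < c ∧ c < e

instance (T : Finset ℕ) : DecidablePred (SepT T) := fun _ =>
  Finset.decidableDforallFinset

lemma sep_card (T : Finset ℕ) :
    (T.powerset.filter (fun S => SepT T S)).card = Nat.fib (T.card + 2) := by
  induction T using Finset.strongInduction with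
  | _ T ih => ?_
  rcases T.eq_empty_or_nonempty with rfl | hT
  · rw [Finset.powerset_empty, Finset.filter_singleton, if_pos]
    · rfl
    · intro d hd; exact absurd hd (Finset.notMem_empty d)
  set m := T.min' hT with hm
  have hmT : m ∈ T := T.min'_mem hT
  have hmin : ∀ x ∈ T, m ≤ x := fun x hx => T.min'_le x hx
  have key := Finset.card_filter_add_card_filter_not (s := T.powerset.filter (fun S => SepT T S)) (fun S => m ∈ S)
  rw [Finset.filter_filter, Finset.filter_filter] at key
  -- Part A : those without m
  have hA : (T.powerset.filter (fun S => SepT T S ∧ m ∉ S))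
      = ((T.erase m).powerset.filter (fun S => SepT (T.erase m) S)) := by
    ext S
    simp only [Finset.mem_filter, Finset.mem_powerset, Finset.subset_erase]
    constructor
    · rintro ⟨hST, hsep, hmS⟩
      refine ⟨⟨hST, hmS⟩, ?_⟩
      intro x hx y hy hxy
      obtain ⟨c, hcT, h1, h2⟩ := hsep x hx y hy hxy
      refine ⟨c, Finset.mem_erase.2 ⟨?_, hcT⟩, h1, h2⟩
      have hxT : x ∈ T := hST hx
      have : m ≤ x := hmin x hxT
      omega
    · rintro ⟨⟨hST, hmS⟩, hsep⟩
      refine ⟨hST, ?_, hmS⟩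
      intro x hx y hy hxy
      obtain ⟨c, hcT, h1, h2⟩ := hsep x hx y hy hxy
      exact ⟨c, Finset.mem_of_mem_erase hcT, h1, h2⟩
  have cardA : (T.powerset.filter (fun S => SepT T S ∧ m ∉ S)).card = Nat.fib (T.card - 1 + 2) := by
    rw [hA, ih _ (Finset.erase_ssubset hmT), Finset.card_erase_of_mem hmT]
  -- Part B : those with m
  rcases (T.erase m).eq_empty_or_nonempty with he | he
  · -- T = {m}
    have hT1 : T = {m} := by
      apply Finset.eq_singleton_iff_unique_mem.2
      refine ⟨hmT, fun x hx => ?_⟩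
      by_contra hne
      exact (Finset.notMem_empty x) (he ▸ Finset.mem_erase.2 ⟨hne, hx⟩)
    have cardB : (T.powerset.filter (fun S => SepT T S ∧ m ∈ S)).card = 1 := by
      rw [hT1]
      have : ({m} : Finset ℕ).powerset.filter (fun S => SepT {m} S ∧ m ∈ S) = {({m} : Finset ℕ)} := by
        ext S
        simp only [Finset.mem_filter, Finset.mem_powerset, Finset.mem_singleton,
          Finset.subset_singleton_iff]
        constructor
        · rintro ⟨hS, _, hmS⟩
          rcases hS with rfl | rfl
          · exact absurd hmS (Finset.notMem_empty m)
          · rfl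
        · rintro rfl
          refine ⟨Or.inr rfl, ?_, Finset.mem_singleton_self m⟩
          intro x hx y hy hxy
          simp only [Finset.mem_singleton] at hx hy
          omega
      rw [this, Finset.card_singleton]
    have hTc : T.card = 1 := by rw [hT1]; simp
    rw [← key, cardB, cardA, hTc]
    decide
  · -- T.card ≥ 2
    set m' := (T.erase m).min' he with hm'
    have hm'T : m' ∈ T.erase m := (T.erase m).min'_mem he
    have hm'ne : m' ≠ m := (Finset.mem_erase.1 hm'T).1
    have hm'inT : m' ∈ T := (Finset.mem_erase.1 hm'T).2
    have hmm' : m < m' := lt_of_le_of_ne (hmin m' hm'inT) (Ne.symm hm'ne)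
    have hmin' : ∀ x ∈ T, x ≠ m → m' ≤ x := fun x hx hne =>
      (T.erase m).min'_le x (Finset.mem_erase.2 ⟨hne, hx⟩)
    set T' := (T.erase m).erase m' with hT'
    have hT'sub : T' ⊂ T := by
      refine ssubset_of_subset_of_ssubset (Finset.erase_subset _ _) (Finset.erase_ssubset hmT)
    have hmT' : m ∉ T' := fun h => (Finset.mem_erase.1 (Finset.mem_of_mem_erase h)).1 rfl
    have hm'T' : m' ∉ T' := fun h => (Finset.mem_erase.1 h).1 rfl
    have hxT' : ∀ x ∈ T', m' < x := by
      intro x hx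
      have hxe : x ∈ T.erase m := Finset.mem_of_mem_erase hx
      have : m' ≤ x := (T.erase m).min'_le x hxe
      have : x ≠ m' := (Finset.mem_erase.1 hx).1
      omega
    have cardB : (T.powerset.filter (fun S => SepT T S ∧ m ∈ S)).card
        = (T'.powerset.filter (fun S => SepT T' S)).card := by
      apply Finset.card_nbij' (fun S => S.erase m) (fun S => insert m S)
      · -- forward maps to
        intro S hS
        simp only [Finset.mem_coe, Finset.mem_filter, Finset.mem_powerset] at hS ⊢
        obtain ⟨hST, hsep, hmS⟩ := hS
        have hm'S : m' ∉ S := by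
          intro hm'S
          obtain ⟨c, hcT, h1, h2⟩ := hsep m hmS m' hm'S hmm'
          have : m' ≤ c := hmin' c hcT (by omega)
          omega
        constructor
        · intro x hx
          have hxS : x ∈ S := Finset.mem_of_mem_erase hx
          have hxm : x ≠ m := (Finset.mem_erase.1 hx).1
          refine Finset.mem_erase.2 ⟨?_, Finset.mem_erase.2 ⟨hxm, hST hxS⟩⟩
          intro hxm'; exact hm'S (hxm' ▸ hxS)
        · intro x hx y hy hxy
          obtain ⟨c, hcT, h1, h2⟩ := hsep x (Finset.mem_of_mem_erase hx) y (Finset.mem_of_mem_erase hy) hxy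
          have hxS : x ∈ S := Finset.mem_of_mem_erase hx
          have hxm : x ≠ m := (Finset.mem_erase.1 hx).1
          have hxm' : x ≠ m' := fun h => hm'S (h ▸ hxS)
          have hx1 : m' ≤ x := hmin' x (hST hxS) hxm
          have hx2 : m' < x := lt_of_le_of_ne hx1 (Ne.symm hxm')
          refine ⟨c, Finset.mem_erase.2 ⟨by omega, Finset.mem_erase.2 ⟨by omega, hcT⟩⟩, h1, h2⟩
      · -- backward maps to
        intro S hS
        simp only [Finset.mem_coe, Finset.mem_filter, Finset.mem_powerset] at hS ⊢
        obtain ⟨hST, hsep⟩ := hS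
        refine ⟨?_, ?_, Finset.mem_insert_self m S⟩
        · intro x hx
          rcases Finset.mem_insert.1 hx with rfl | hxS
          · exact hmT
          · exact Finset.mem_of_mem_erase (Finset.mem_of_mem_erase (hST hxS))
        · intro x hx y hy hxy
          rcases Finset.mem_insert.1 hy with rfl | hyS
          · rcases Finset.mem_insert.1 hx with rfl | hxS
            · omega
            · have := hxT' x (hST hxS); omega
          · rcases Finset.mem_insert.1 hx with rfl | hxS
            · -- x = m, y ∈ S ⊆ T', witness m'
              have := hxT' y (hST hyS)
              exact ⟨m', hm'inT, hmm', this⟩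
            · obtain ⟨c, hcT', h1, h2⟩ := hsep x hxS y hyS hxy
              exact ⟨c, Finset.mem_of_mem_erase (Finset.mem_of_mem_erase hcT'), h1, h2⟩
      · -- left inverse
        intro S hS
        simp only [Finset.mem_coe, Finset.mem_filter, Finset.mem_powerset] at hS
        exact Finset.insert_erase hS.2.2
      · -- right inverse
        intro S hS
        simp only [Finset.mem_coe, Finset.mem_filter, Finset.mem_powerset] at hS
        apply Finset.erase_insert
        intro hmS
        exact hmT' (hS.1 hmS)
    have hcT' : T'.card = T.card - 2 := by
      rw [hT', Finset.card_erase_of_mem hm'T, Finset.card_erase_of_mem hmT]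
      omega
    have cardB2 : (T.powerset.filter (fun S => SepT T S ∧ m ∈ S)).card = Nat.fib (T.card - 2 + 2) := by
      rw [cardB, ih _ hT'sub, hcT']
    have h2 : 2 ≤ T.card := by
      have : 1 ≤ (T.erase m).card := Finset.card_pos.2 he
      have := Finset.card_erase_of_mem hmT
      omega
    have hfib : Nat.fib (T.card - 1 + 2) + Nat.fib (T.card - 2 + 2) = Nat.fib (T.card + 2) := by
      obtain ⟨k, hk⟩ : ∃ k, T.card = k + 2 := ⟨T.card - 2, by omega⟩
      rw [hk]
      simp only [Nat.add_sub_cancel, show k + 2 - 1 = k + 1 by omega]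
      rw [show k + 2 + 2 = (k + 2) + 2 from rfl]
      rw [Nat.fib_add_two (n := k + 2)]
      ring
    omega

lemma ms_card_le_sum (s : Multiset ℕ) (h : ∀ x ∈ s, 0 < x) : Multiset.card s ≤ s.sum := by
  induction s using Multiset.induction with
  | empty => simp
  | cons a t ih =>
    simp only [Multiset.card_cons, Multiset.sum_cons]
    have := h a (by simp)
    have := ih (fun x hx => h x (by simp [hx]))
    omega

lemma card_le (n : ℕ) (p : Nat.Partition n) : p.parts.toFinset.card ≤ n := by
  have h1 : p.parts.toFinset.card ≤ Multiset.card p.parts := Multiset.toFinset_card_le _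
  have h2 : Multiset.card p.parts ≤ p.parts.sum :=
    ms_card_le_sum p.parts (fun i hi => p.parts_pos hi)
  have h3 : p.parts.sum = n := p.parts_sum
  omega

/-- `b n = ∑_{r=0}^{n} F_{r+2} · d_r(n)`, where `F` is the Fibonacci sequence with
`F 1 = F 2 = 1` and `d_r(n)` counts partitions of `n` with exactly `r` distinct
part-sizes. -/
theorem b_eq_sum_fib_mul_d (n : ℕ) :
    b n = ∑ r ∈ Finset.range (n + 1), Nat.fib (r + 2) * d r n := by
  have step1 : b n = ∑ p : Nat.Partition n, Nat.fib (p.parts.toFinset.card + 2) := by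
    unfold b
    apply Finset.sum_congr rfl
    intro p _
    have : (fun S => SepCond p S) = (fun S => SepT p.parts.toFinset S) := rfl
    rw [show (p.parts.toFinset.powerset.filter (fun S => SepCond p S))
        = (p.parts.toFinset.powerset.filter (fun S => SepT p.parts.toFinset S)) from rfl]
    exact sep_card _
  rw [step1]
  rw [← Finset.sum_fiberwise_of_maps_to (t := Finset.range (n + 1))
    (g := fun p : Nat.Partition n => p.parts.toFinset.card)
    (fun p _ => Finset.mem_range.2 (Nat.lt_succ_of_le (card_le n p)))
    (fun p => Nat.fib (p.parts.toFinset.card + 2))]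
  apply Finset.sum_congr rfl
  intro r _
  rw [Finset.sum_congr rfl (fun p hp => by
    rw [(Finset.mem_filter.1 hp).2]), Finset.sum_const, smul_eq_mul, mul_comm]
  rfl
end

section
/- For all natural numbers n and r, the number of block-separated overpartitions of n whose underlying partition has exactly r distinct part-sizes equals F_{r+2} · d_r(n), where d_r(n) is the number of partitions of n having exactly r distinct part-sizes. -/

def Good (T S : Finset ℕ) : Prop :=
  ∀ d ∈ S, ∀ e ∈ S, d < e → ∃ c ∈ T, d < c ∧ c < e

instance (T : Finset ℕ) : DecidablePred (Good T) := fun _ =>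
  Finset.decidableDforallFinset

lemma good_erase_top {T S : Finset ℕ} {m : ℕ} (hm : ∀ x ∈ T, x ≤ m)
    (hS : S ⊆ T.erase m) : Good T S ↔ Good (T.erase m) S := by
  constructor
  · intro h d hd e he hde
    obtain ⟨c, hc, hdc, hce⟩ := h d hd e he hde
    have heT := hS he
    have : e < m := lt_of_le_of_ne (hm e (Finset.mem_of_mem_erase heT))
      (Finset.ne_of_mem_erase heT)
    exact ⟨c, Finset.mem_erase.mpr ⟨by omega, hc⟩, hdc, hce⟩
  · intro h d hd e he hde
    obtain ⟨c, hc, hdc, hce⟩ := h d hd e he hde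
    exact ⟨c, Finset.mem_of_mem_erase hc, hdc, hce⟩

lemma key : ∀ (k : ℕ) (T : Finset ℕ), T.card = k →
    (T.powerset.filter (Good T)).card = Nat.fib (k + 2) := by
  intro k
  induction k using Nat.strong_induction_on with
  | _ k ih =>
  match k with
  | 0 =>
    intro T hT
    rw [Finset.card_eq_zero] at hT
    subst hT
    have hg : Good ∅ ∅ := by intro d hd; simp at hd
    simp [Finset.powerset_empty, Finset.filter_singleton, hg]
  | 1 =>
    intro T hT
    have hall : ∀ S ∈ T.powerset, Good T S := by
      obtain ⟨a, rfl⟩ := Finset.card_eq_one.mp hT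
      intro S hS d hd e he hde
      have hd' := Finset.mem_singleton.mp (Finset.mem_powerset.mp hS hd)
      have he' := Finset.mem_singleton.mp (Finset.mem_powerset.mp hS he)
      omega
    rw [Finset.filter_true_of_mem hall, Finset.card_powerset, hT]
    rfl
  | (k + 2) =>
    intro T hT
    have hTne : T.Nonempty := Finset.card_pos.mp (by omega)
    set m := T.max' hTne with hm
    have hmT : m ∈ T := T.max'_mem hTne
    have hmle : ∀ x ∈ T, x ≤ m := fun x hx => T.le_max' x hx
    set T' := T.erase m with hT'
    have hT'card : T'.card = k + 1 := by
      rw [hT', Finset.card_erase_of_mem hmT, hT]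
      omega
    have hT'ne : T'.Nonempty := Finset.card_pos.mp (by omega)
    set m' := T'.max' hT'ne with hm'
    have hm'T' : m' ∈ T' := T'.max'_mem hT'ne
    have hm'le : ∀ x ∈ T', x ≤ m' := fun x hx => T'.le_max' x hx
    have hm'lt : m' < m := lt_of_le_of_ne (hmle m' (Finset.mem_of_mem_erase hm'T'))
      (Finset.ne_of_mem_erase hm'T')
    set T'' := T'.erase m' with hT''
    have hT''card : T''.card = k := by
      rw [hT'', Finset.card_erase_of_mem hm'T', hT'card]
      omega
    -- split by m ∈ S
    have hsplit :
        ((T.powerset.filter (Good T)).filter (fun S => m ∈ S)).card +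
        ((T.powerset.filter (Good T)).filter (fun S => ¬ m ∈ S)).card =
        (T.powerset.filter (Good T)).card :=
      Finset.card_filter_add_card_filter_not _
    -- B : subsets not containing m
    have hB : (T.powerset.filter (Good T)).filter (fun S => ¬ m ∈ S)
        = T'.powerset.filter (Good T') := by
      ext S
      simp only [Finset.mem_filter, Finset.mem_powerset]
      constructor
      · rintro ⟨⟨hsub, hgood⟩, hmS⟩
        have hsub' : S ⊆ T' := Finset.subset_erase.mpr ⟨hsub, hmS⟩
        exact ⟨hsub', (good_erase_top hmle hsub').mp hgood⟩
      · rintro ⟨hsub', hgood⟩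
        obtain ⟨hsub, hmS⟩ := Finset.subset_erase.mp hsub'
        exact ⟨⟨hsub, (good_erase_top hmle hsub').mpr hgood⟩, hmS⟩
    -- A : subsets containing m, biject to good subsets of T''
    have hA : ((T.powerset.filter (Good T)).filter (fun S => m ∈ S)).card
        = (T''.powerset.filter (Good T'')).card := by
      refine Finset.card_bij' (fun S _ => S.erase m) (fun S _ => insert m S)
        ?_ ?_ ?_ ?_
      · -- maps to
        intro S hS
        simp only [Finset.mem_filter, Finset.mem_powerset] at hS
        obtain ⟨⟨hsub, hgood⟩, hmS⟩ := hS
        have hS'sub : S.erase m ⊆ T' := Finset.erase_subset_erase _ hsub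
        have hm'S : m' ∉ S.erase m := by
          intro hmem
          have hm'S' : m' ∈ S := Finset.mem_of_mem_erase hmem
          obtain ⟨c, hcT, h1, h2⟩ := hgood m' hm'S' m hmS hm'lt
          have : c ∈ T' := Finset.mem_erase.mpr ⟨by omega, hcT⟩
          have := hm'le c this
          omega
        simp only [Finset.mem_filter, Finset.mem_powerset]
        refine ⟨Finset.subset_erase.mpr ⟨hS'sub, hm'S⟩, ?_⟩
        intro a ha b hb hab
        have haS := Finset.mem_of_mem_erase ha
        have hbS := Finset.mem_of_mem_erase hb
        obtain ⟨c, hcT, h1, h2⟩ := hgood a haS b hbS hab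
        have hbm' : b < m' := by
          have hb' : b ∈ T' := hS'sub hb
          have := hm'le b hb'
          have := Finset.ne_of_mem_erase (Finset.subset_erase.mpr ⟨hS'sub, hm'S⟩ hb)
          omega
        have hcT'' : c ∈ T'' := by
          rw [hT'', Finset.mem_erase, hT', Finset.mem_erase]
          exact ⟨by omega, by omega, hcT⟩
        exact ⟨c, hcT'', h1, h2⟩
      · -- inverse maps to
        intro S hS
        simp only [Finset.mem_filter, Finset.mem_powerset] at hS ⊢
        obtain ⟨hsub, hgood⟩ := hS
        have hSsub' : S ⊆ T' := hsub.trans (Finset.erase_subset _ _)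
        have hSltm' : ∀ x ∈ S, x < m' := by
          intro x hx
          have := hm'le x (hSsub' hx)
          have := Finset.ne_of_mem_erase (hsub hx)
          omega
        refine ⟨⟨Finset.insert_subset hmT (hSsub'.trans (Finset.erase_subset _ _)), ?_⟩,
          Finset.mem_insert_self _ _⟩
        intro a ha b hb hab
        rcases Finset.mem_insert.mp ha with rfl | haS
        · rcases Finset.mem_insert.mp hb with rfl | hbS
          · omega
          · have := hSltm' b hbS
            have := hmle b (hSsub'.trans (Finset.erase_subset _ _) hbS)
            omega
        · rcases Finset.mem_insert.mp hb with rfl | hbS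
          · exact ⟨m', Finset.mem_of_mem_erase hm'T', hSltm' a haS, hm'lt⟩
          · obtain ⟨c, hcT, h1, h2⟩ := hgood a haS b hbS hab
            exact ⟨c, Finset.mem_of_mem_erase (Finset.mem_of_mem_erase hcT), h1, h2⟩
      · -- left inverse
        intro S hS
        exact Finset.insert_erase (Finset.mem_filter.mp hS).2
      · -- right inverse
        intro S hS
        simp only [Finset.mem_filter, Finset.mem_powerset] at hS
        have hmS : m ∉ S := by
          intro hmem
          exact Finset.ne_of_mem_erase (hS.1 hmem |> Finset.mem_of_mem_erase) rfl
        exact Finset.erase_insert hmS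
    have h1 := ih (k + 1) (by omega) T' hT'card
    have h2 := ih k (by omega) T'' hT''card
    rw [← hsplit, hA, hB, h1, h2, Nat.fib_add_two (n := k + 2)]

/-- The number of block-separated overpartitions of `n` whose underlying partition has
exactly `r` distinct part-sizes equals `F_{r+2} · d_r(n)`, where `F` is the Fibonacci
sequence with `F 1 = F 2 = 1`. -/
theorem card_blockSep_fixed_r (n r : ℕ) :
    (∑ p ∈ (Finset.univ : Finset (Nat.Partition n)).filter
        (fun p => p.parts.toFinset.card = r),
      (p.parts.toFinset.powerset.filter (fun S => SepCond p S)).card)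
      = Nat.fib (r + 2) * d r n := by
  have h : ∀ p ∈ (Finset.univ : Finset (Nat.Partition n)).filter
      (fun p => p.parts.toFinset.card = r),
      (p.parts.toFinset.powerset.filter (fun S => SepCond p S)).card = Nat.fib (r + 2) := by
    intro p hp
    have hcard := (Finset.mem_filter.mp hp).2
    exact key r p.parts.toFinset hcard
  rw [Finset.sum_congr rfl h, Finset.sum_const, d, smul_eq_mul, Nat.mul_comm]
end

section
/- For all natural numbers n, r and m, the number of block-separated overpartitions of n whose underlying partition has exactly r distinct part-sizes and whose set of overlined part-sizes has exactly m elements equals C(r − m + 1, m) · d_r(n), where C(a,b) is the binomial coefficient (equal to 0 when b > a) and d_r(n) is the number of partitions of n having exactly r distinct part-sizes. -/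
open Finset

/-- `A r m`: nonadjacent `m`-subsets of `range r`. -/
def A (r m : ℕ) : Finset (Finset ℕ) :=
  (range r).powerset.filter (fun S => (∀ a ∈ S, a + 1 ∉ S) ∧ S.card = m)

lemma A_zero (m : ℕ) : (A 0 m).card = Nat.choose (0 + 1 - m) m := by
  cases m with
  | zero => decide
  | succ m =>
    have h : A 0 (m + 1) = ∅ := by
      ext S
      simp [A, Finset.subset_empty]
      rintro rfl -
      simp
    rw [h]
    have : 0 + 1 - (m + 1) = 0 := by omega
    rw [this, Nat.choose_eq_zero_of_lt (by omega)]
    simp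

lemma A_one (m : ℕ) : (A 1 m).card = Nat.choose (1 + 1 - m) m := by
  match m with
  | 0 =>
    have : A 1 0 = {∅} := by
      ext S
      simp only [A, mem_filter, mem_powerset, Finset.card_eq_zero, mem_singleton]
      constructor
      · rintro ⟨-, -, rfl⟩; rfl
      · rintro rfl; simp
    rw [this]; simp
  | 1 =>
    have : A 1 1 = {{0}} := by
      ext S
      simp only [A, mem_filter, mem_powerset, mem_singleton]
      constructor
      · rintro ⟨h1, -, h3⟩
        rcases Finset.card_eq_one.mp h3 with ⟨a, rfl⟩
        have ha := h1 (Finset.mem_singleton_self a)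
        simp only [mem_range, Nat.lt_one_iff] at ha
        rw [ha]
      · rintro rfl
        refine ⟨by simp, by simp, by simp⟩
    rw [this]; simp
  | (m + 2) =>
    have : A 1 (m + 2) = ∅ := by
      ext S
      simp only [A, mem_filter, mem_powerset, notMem_empty, iff_false, not_and]
      intro h1 h2
      have := Finset.card_le_card h1
      simp at this
      omega
    rw [this]
    have : 1 + 1 - (m + 2) = 0 := by omega
    rw [this, Nat.choose_eq_zero_of_lt (by omega)]
    simp

lemma A_m0 (r : ℕ) : (A r 0).card = 1 := by
  have : A r 0 = {∅} := by
    ext S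
    simp only [A, mem_filter, mem_powerset, Finset.card_eq_zero, mem_singleton]
    constructor
    · rintro ⟨-, -, rfl⟩; rfl
    · rintro rfl; simp
  rw [this]; simp

lemma A_rec (r m : ℕ) :
    (A (r + 2) (m + 1)).card = (A (r + 1) (m + 1)).card + (A r m).card := by
  classical
  rw [← Finset.card_filter_add_card_filter_not
    (p := fun S => (r + 1) ∉ S) (s := A (r + 2) (m + 1))]
  congr 1
  · -- not containing r+1 : equals A (r+1) (m+1)
    congr 1
    ext S
    simp only [A, mem_filter, mem_powerset]
    constructor
    · rintro ⟨⟨h1, h2⟩, h3⟩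
      refine ⟨fun x hx => ?_, h2⟩
      have := h1 hx
      simp only [mem_range] at this ⊢
      rcases Nat.lt_or_ge x (r + 1) with h | h
      · exact h
      · exfalso; apply h3; have hx2 : x = r + 1 := by omega
        rwa [← hx2]
    · rintro ⟨h1, h2⟩
      have hsub : S ⊆ range (r + 2) := h1.trans (by
        intro x hx; simp only [mem_range] at hx ⊢; omega)
      refine ⟨⟨hsub, h2⟩, fun hmem => ?_⟩
      have := h1 hmem
      simp at this
  · -- containing r+1 : bijection with A r m via erase/insert
    simp only [not_not]
    refine Finset.card_bij' (fun S _ => S.erase (r + 1)) (fun S _ => insert (r + 1) S)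
      ?hi ?hj ?left ?right
    case hi =>
      rintro S hS
      simp only [mem_filter] at hS
      obtain ⟨hA, hmem⟩ := hS
      simp only [A, mem_filter, mem_powerset] at hA ⊢
      obtain ⟨hsub, hcond, hcard⟩ := hA
      refine ⟨?_, ?_, ?_⟩
      · intro x hx
        rcases Finset.mem_erase.mp hx with ⟨hne, hxS⟩
        have hxr : x < r + 2 := by simpa [mem_range] using hsub hxS
        have hxnr : x ≠ r := by
          rintro rfl
          exact hcond x hxS hmem
        simp only [mem_range]; omega
      · intro a ha hcontra
        exact hcond a (Finset.mem_of_mem_erase ha) (Finset.mem_of_mem_erase hcontra)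
      · rw [Finset.card_erase_of_mem hmem, hcard]; omega
    case hj =>
      rintro S hS
      simp only [A, mem_filter, mem_powerset] at hS ⊢
      obtain ⟨hsub, hcond, hcard⟩ := hS
      have hnm : (r + 1) ∉ S := by
        intro h; have := hsub h; simp only [mem_range] at this; omega
      refine ⟨⟨?_, ?_, ?_⟩, by simp⟩
      · intro x hx
        rcases Finset.mem_insert.mp hx with rfl | hxS
        · simp [mem_range]
        · have := hsub hxS; simp only [mem_range] at this ⊢; omega
      · intro a ha hcontra
        rcases Finset.mem_insert.mp ha with rfl | haS
        · rcases Finset.mem_insert.mp hcontra with h | h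
          · omega
          · have := hsub h; simp only [mem_range] at this; omega
        · rcases Finset.mem_insert.mp hcontra with h | h
          · have := hsub haS; simp only [mem_range] at this; omega
          · exact hcond a haS h
      · rw [Finset.card_insert_of_notMem hnm, hcard]
    case left =>
      rintro S hS
      simp only [mem_filter] at hS
      exact Finset.insert_erase hS.2
    case right =>
      rintro S hS
      simp only [A, mem_filter, mem_powerset] at hS
      obtain ⟨hsub, -, -⟩ := hS
      apply Finset.erase_insert
      intro h; have := hsub h; simp only [mem_range] at this; omega

lemma A_card : ∀ r m : ℕ, (A r m).card = Nat.choose (r + 1 - m) m := by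
  intro r
  induction r using Nat.strong_induction_on with
  | _ r ih =>
    match r with
    | 0 => exact A_zero
    | 1 => exact A_one
    | (r + 2) =>
      intro m
      cases m with
      | zero => simp [A_m0]
      | succ m =>
        rw [A_rec, ih (r + 1) (by omega) (m + 1), ih r (by omega) m]
        rcases le_or_gt m (r + 1) with h | h
        · have h1 : r + 2 + 1 - (m + 1) = (r + 1 - m) + 1 := by omega
          have h2 : r + 1 + 1 - (m + 1) = r + 1 - m := by omega
          rw [h1, h2, Nat.choose_succ_succ]
          simp only [Nat.succ_eq_add_one]
          omega
        · have e1 : Nat.choose (r + 1 + 1 - (m + 1)) (m + 1) = 0 :=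
            Nat.choose_eq_zero_of_lt (by omega)
          have e3 : Nat.choose (r + 1 - m) m = 0 :=
            Nat.choose_eq_zero_of_lt (by omega)
          have e2 : Nat.choose (r + 2 + 1 - (m + 1)) (m + 1) = 0 :=
            Nat.choose_eq_zero_of_lt (by omega)
          rw [e1, e2, e3]

lemma card_sep (T : Finset ℕ) (r m : ℕ) (hT : T.card = r) :
    (T.powerset.filter
        (fun S => (∀ d ∈ S, ∀ e ∈ S, d < e → ∃ c ∈ T, d < c ∧ c < e) ∧ S.card = m)).card
      = Nat.choose (r + 1 - m) m := by
  classical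
  rw [← A_card r m]
  set e := T.orderIsoOfFin hT with he
  set F : ℕ → ℕ := fun a => if h : a < r then (e ⟨a, h⟩ : ℕ) else 0 with hF
  set G : ℕ → ℕ := fun c => if h : c ∈ T then ((e.symm ⟨c, h⟩ : Fin r) : ℕ) else 0 with hG
  have hFmem : ∀ a, a < r → F a ∈ T := by
    intro a h; simp only [hF, dif_pos h]; exact (e ⟨a, h⟩).2
  have hFlt : ∀ a b, a < r → b < r → (F a < F b ↔ a < b) := by
    intro a b ha hb
    simp only [hF, dif_pos ha, dif_pos hb]
    exact (Subtype.coe_lt_coe).trans (e.lt_iff_lt.trans (by exact Fin.mk_lt_mk))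
  have hGlt : ∀ c c', c ∈ T → c' ∈ T → (G c < G c' ↔ c < c') := by
    intro c c' hc hc'
    simp only [hG, dif_pos hc, dif_pos hc']
    exact (Fin.lt_iff_val_lt_val.symm).trans (e.symm.lt_iff_lt.trans (by exact Subtype.mk_lt_mk))
  have hGF : ∀ a, a < r → G (F a) = a := by
    intro a h
    simp only [hF, hG, dif_pos h, dif_pos (e ⟨a, h⟩).2]
    have : (⟨(e ⟨a, h⟩ : ℕ), (e ⟨a, h⟩).2⟩ : {x // x ∈ T}) = e ⟨a, h⟩ := rfl
    rw [this, e.symm_apply_apply]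
  have hGr : ∀ c, c ∈ T → G c < r := by
    intro c hc; simp only [hG, dif_pos hc]; exact (e.symm ⟨c, hc⟩).2
  have hFG : ∀ c, c ∈ T → F (G c) = c := by
    intro c hc
    simp only [hF, hG, dif_pos hc]
    rw [dif_pos (e.symm ⟨c, hc⟩).isLt, Fin.eta, e.apply_symm_apply]
  refine Finset.card_bij' (fun S _ => S.image G) (fun S _ => S.image F) ?hi ?hj ?left ?right
  case hi =>
    intro S hS
    simp only [mem_filter, mem_powerset] at hS
    obtain ⟨hsub, hcond, hcard⟩ := hS
    simp only [A, mem_filter, mem_powerset]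
    refine ⟨?_, ?_, ?_⟩
    · intro x hx
      rcases Finset.mem_image.mp hx with ⟨c, hc, rfl⟩
      exact Finset.mem_range.mpr (hGr c (hsub hc))
    · intro a ha hcontra
      rcases Finset.mem_image.mp ha with ⟨x, hx, hax⟩
      rcases Finset.mem_image.mp hcontra with ⟨y, hy, hay⟩
      have hxy : x < y := by
        rw [← hGlt x y (hsub hx) (hsub hy), hax, hay]; omega
      rcases hcond x hx y hy hxy with ⟨c, hcT, hc1, hc2⟩
      have g1 : G x < G c := (hGlt x c (hsub hx) hcT).mpr hc1
      have g2 : G c < G y := (hGlt c y hcT (hsub hy)).mpr hc2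
      omega
    · rw [Finset.card_image_of_injOn, hcard]
      intro x hx y hy hxy
      by_contra hne
      rcases Ne.lt_or_gt hne with h | h
      · have := (hGlt x y (hsub hx) (hsub hy)).mpr h; omega
      · have := (hGlt y x (hsub hy) (hsub hx)).mpr h; omega
  case hj =>
    intro S hS
    simp only [A, mem_filter, mem_powerset] at hS
    obtain ⟨hsub, hcond, hcard⟩ := hS
    have hsub' : ∀ x ∈ S, x < r := fun x hx => Finset.mem_range.mp (hsub hx)
    simp only [mem_filter, mem_powerset]
    refine ⟨?_, ?_, ?_⟩
    · intro x hx
      rcases Finset.mem_image.mp hx with ⟨a, ha, rfl⟩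
      exact hFmem a (hsub' a ha)
    · intro dd hd ee hee hde
      rcases Finset.mem_image.mp hd with ⟨a, ha, rfl⟩
      rcases Finset.mem_image.mp hee with ⟨b, hb, rfl⟩
      have hab : a < b := (hFlt a b (hsub' a ha) (hsub' b hb)).mp hde
      have hne : b ≠ a + 1 := by
        intro hba; apply hcond a ha; rw [← hba]; exact hb
      have ha1 : a + 1 < r := by have := hsub' b hb; omega
      refine ⟨F (a + 1), hFmem _ ha1, ?_, ?_⟩
      · exact (hFlt a (a + 1) (hsub' a ha) ha1).mpr (by omega)
      · exact (hFlt (a + 1) b ha1 (hsub' b hb)).mpr (by omega)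
    · rw [Finset.card_image_of_injOn, hcard]
      intro x hx y hy hxy
      by_contra hne
      rcases Ne.lt_or_gt hne with h | h
      · have := (hFlt x y (hsub' x hx) (hsub' y hy)).mpr h; omega
      · have := (hFlt y x (hsub' y hy) (hsub' x hx)).mpr h; omega
  case left =>
    intro S hS
    simp only [mem_filter, mem_powerset] at hS
    show (S.image G).image F = S
    rw [Finset.image_image, Function.comp_def]
    rw [Finset.image_congr (g := id) (fun x hx => hFG x (hS.1 hx)), Finset.image_id]
  case right =>
    intro S hS
    simp only [A, mem_filter, mem_powerset] at hS
    show (S.image F).image G = S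
    rw [Finset.image_image, Function.comp_def]
    rw [Finset.image_congr (g := id) (fun x hx => hGF x (Finset.mem_range.mp (hS.1 hx))),
      Finset.image_id]


/-- The number of block-separated overpartitions of `n` whose underlying partition has
exactly `r` distinct part-sizes and with exactly `m` overlined part-sizes equals
`C(r - m + 1, m) · d_r(n)`, where `C` is the binomial coefficient (vanishing when
`m > r - m + 1`). -/
theorem card_blockSep_fixed_r_m (n r m : ℕ) :
    (∑ p ∈ (Finset.univ : Finset (Nat.Partition n)).filter
        (fun p => p.parts.toFinset.card = r),
      (p.parts.toFinset.powerset.filter (fun S => SepCond p S ∧ S.card = m)).card)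
      = Nat.choose (r + 1 - m) m * d r n := by
  classical
  have hterm : ∀ p ∈ (Finset.univ : Finset (Nat.Partition n)).filter
      (fun p => p.parts.toFinset.card = r),
      (p.parts.toFinset.powerset.filter (fun S => SepCond p S ∧ S.card = m)).card
        = Nat.choose (r + 1 - m) m := by
    intro p hp
    have hc : p.parts.toFinset.card = r := (Finset.mem_filter.mp hp).2
    exact card_sep p.parts.toFinset r m hc
  rw [Finset.sum_congr rfl hterm, Finset.sum_const, smul_eq_mul, ← d, mul_comm]
end
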